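/- Let T be a finite 2-group and H a finite group of odd order such that d(T × H) = 2 and the Frattini subgroup Φ(T) is nontrivial. Then the nim-number of the achievement game GEN(T × H) is *0. -/

import Mathlib

universe u

namespace SetTheory

/-- Combinatorial pregames, as `SetTheory.PGame` in the older Mathlib (since removed). -/
inductive PGame : Type (u + 1)
  | mk : ∀ α β : Type u, (α → PGame) → (β → PGame) → PGame

namespace PGame

instance : Zero PGame := ⟨⟨PEmpty, PEmpty, PEmpty.elim, PEmpty.elim⟩⟩

end PGame

end SetTheory

/-- Nimbers, as in the older Mathlib (since removed): a type synonym for ordinals. -/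
def Nimber : Type (u + 1) := Ordinal.{u}

namespace Nimber

noncomputable instance : LinearOrder Nimber := inferInstanceAs (LinearOrder Ordinal)

noncomputable instance : ConditionallyCompleteLinearOrderBot Nimber :=
  inferInstanceAs (ConditionallyCompleteLinearOrderBot Ordinal)

end Nimber

/-- The identity map from ordinals to nimbers. -/
def Ordinal.toNimber : Ordinal ≃o Nimber := OrderIso.refl _

prefix:75 "∗" => Ordinal.toNimber

namespace SetTheory

namespace PGame

/-- The Grundy value of an impartial game (mex of the values of the left options). -/
noncomputable def grundyValue : PGame.{u} → Nimber.{u}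
  | mk _ _ L _ => sInf (Set.range fun i => grundyValue (L i))ᶜ

end PGame

end SetTheory

open SetTheory Nimber
open scoped Classical

/-- The achievement game `GEN(G)` of Anderson and Harary: positions are (finite) subsets
of the finite group `G`; a position that generates `G` is terminal, and otherwise the
options are obtained by selecting a previously-unselected element of `G`.  The game is
impartial, so the left and right options agree. -/
noncomputable def genGame {G : Type} [Group G] [Fintype G] (P : Finset G) : PGame :=
  if Subgroup.closure (P : Set G) = ⊤ then 0
  else
    PGame.mk {g : G // g ∉ P} {g : G // g ∉ P}
      (fun g => genGame (insert g.1 P)) (fun g => genGame (insert g.1 P))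
termination_by Fintype.card G - P.card
decreasing_by
  all_goals
    have h1 : (insert g.1 P).card = P.card + 1 := Finset.card_insert_of_notMem g.2
    have h2 : (insert g.1 P).card ≤ Fintype.card G := Finset.card_le_univ _
    omega

/-- The nim-number of the achievement game `GEN(G)`, i.e. the Sprague-Grundy value of the
starting position `∅`. -/
noncomputable def nimGEN (G : Type) [Group G] [Fintype G] : Nimber :=
  PGame.grundyValue (genGame (∅ : Finset G))

/-- `d(G)`: the minimal cardinality of a generating set of `G`. -/
noncomputable def minGen (G : Type) [Group G] : ℕ :=
  sInf {n : ℕ | ∃ S : Finset G, S.card = n ∧ Subgroup.closure (S : Set G) = ⊤}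

section Aux

variable {G : Type} [Group G] [Fintype G]

lemma genGame_of_top {P : Finset G} (h : Subgroup.closure (P : Set G) = ⊤) :
    genGame P = 0 := by
  rw [genGame, if_pos h]

lemma genGame_of_not_top {P : Finset G} (h : ¬ Subgroup.closure (P : Set G) = ⊤) :
    genGame P = PGame.mk {g : G // g ∉ P} {g : G // g ∉ P}
      (fun g => genGame (insert g.1 P)) (fun g => genGame (insert g.1 P)) := by
  rw [genGame, if_neg h]

lemma grundy_mk {α β : Type} (L : α → PGame.{0}) (R : β → PGame.{0}) :
    PGame.grundyValue (PGame.mk α β L R) = sInf (Set.range fun i => PGame.grundyValue (L i))ᶜ := by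
  rw [PGame.grundyValue]

lemma grundy_eq_bot_of {α β : Type} (L : α → PGame.{0}) (R : β → PGame.{0})
    (h : ∀ i, PGame.grundyValue (L i) ≠ ⊥) : PGame.grundyValue (PGame.mk α β L R) = ⊥ := by
  rw [grundy_mk]
  exact le_antisymm (csInf_le (OrderBot.bddBelow _) (by rintro ⟨i, hi⟩; exact h i hi)) bot_le

lemma grundy_zero : PGame.grundyValue (0 : PGame.{0}) = ⊥ :=
  grundy_eq_bot_of (α := PEmpty) (β := PEmpty) PEmpty.elim PEmpty.elim (fun i => i.elim)

lemma grundy_ne_bot_of {α β : Type} [Finite α] (L : α → PGame.{0}) (R : β → PGame.{0}) (i : α)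
    (h : PGame.grundyValue (L i) = ⊥) : PGame.grundyValue (PGame.mk α β L R) ≠ ⊥ := by
  rw [grundy_mk]
  intro hb
  haveI : Infinite Nimber.{0} := Infinite.of_injective (α := Nimber.{0})
    (fun n : ℕ => (show Nimber.{0} from (n : Ordinal.{0}))) (fun a b hab => Nat.cast_injective (R := Ordinal.{0}) hab)
  haveI : WellFoundedLT Nimber := inferInstanceAs (WellFoundedLT Ordinal)
  have hne : (Set.range fun i => PGame.grundyValue (L i))ᶜ.Nonempty :=
    (Set.finite_range _).infinite_compl.nonempty
  have := csInf_mem hne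
  rw [hb] at this
  exact this ⟨i, h⟩

/-- If some (new) move from `P` reaches a position equivalent to `0`, then `genGame P`
is fuzzy with `0`. -/
lemma genGame_fuzzy {P : Finset G} (hP : ¬ Subgroup.closure (P : Set G) = ⊤)
    {x : G} (hx : x ∉ P) (hxe : PGame.grundyValue (genGame (insert x P)) = ⊥) :
    PGame.grundyValue (genGame P) ≠ ⊥ := by
  rw [genGame_of_not_top hP]
  exact grundy_ne_bot_of _ _ (⟨x, hx⟩ : {g : G // g ∉ P}) hxe

/-- The key strategy lemma: a "`t`-paired" position from which no single additional
element generates the group is a previous-player win. -/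
lemma genGame_main (t : G) (ht1 : t ≠ 1) (ht2 : t * t = 1)
    (hng : ∀ S : Set G, Subgroup.closure (insert t S) = ⊤ → Subgroup.closure S = ⊤)
    (n : ℕ) :
    ∀ P : Finset G, Fintype.card G - P.card ≤ n →
      (∀ x ∈ P, t * x ∈ P) →
      (∀ x : G, ¬ Subgroup.closure (↑(insert x P) : Set G) = ⊤) →
      PGame.grundyValue (genGame P) = ⊥ := by
  induction n with
  | zero =>
    intro P hcard _ hins
    exfalso
    have hle : P.card ≤ Fintype.card G := Finset.card_le_univ _
    have : P = Finset.univ := (Finset.card_eq_iff_eq_univ P).1 (by omega)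
    apply hins 1
    subst this
    simp
  | succ n IH =>
    intro P hcard htcl hins
    have hPtop : ¬ Subgroup.closure (P : Set G) = ⊤ := by
      intro h
      apply hins 1
      rw [eq_top_iff, ← h]
      apply Subgroup.closure_mono
      simp only [Finset.coe_insert]
      exact Set.subset_insert _ _
    rw [genGame_of_not_top hPtop]
    apply grundy_eq_bot_of
    intro i
    obtain ⟨g, hg⟩ := i
    show PGame.grundyValue (genGame (insert g P)) ≠ ⊥
    by_cases hwin : ∃ x : G, Subgroup.closure (↑(insert x (insert g P)) : Set G) = ⊤
    · -- the second player can win at once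
      obtain ⟨x, hx⟩ := hwin
      have hxnot : x ∉ insert g P := by
        intro hmem
        rw [Finset.insert_eq_self.2 hmem] at hx
        exact hins g hx
      exact genGame_fuzzy (hins g) hxnot (by rw [genGame_of_top hx]; exact grundy_zero)
    · -- otherwise the second player mirrors with `t * g`
      push_neg at hwin
      have httg : t * (t * g) = g := by rw [← mul_assoc, ht2, one_mul]
      have htg_ne : t * g ≠ g := by
        intro h
        apply ht1
        have : t * g = 1 * g := by rw [h, one_mul]
        exact mul_right_cancel this
      have htgP : t * g ∉ P := by
        intro hmem
        have := htcl _ hmem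
        rw [httg] at this
        exact hg this
      have htg_not : t * g ∉ insert g P := by
        simp only [Finset.mem_insert, not_or]
        exact ⟨htg_ne, htgP⟩
      have hQcardP : (insert (t * g) (insert g P)).card = P.card + 2 := by
        rw [Finset.card_insert_of_notMem htg_not, Finset.card_insert_of_notMem hg]
      have hQcard : Fintype.card G - (insert (t * g) (insert g P)).card ≤ n := by omega
      have hQtcl : ∀ x ∈ insert (t * g) (insert g P), t * x ∈ insert (t * g) (insert g P) := by
        intro x hx
        simp only [Finset.mem_insert] at hx ⊢
        rcases hx with rfl | rfl | hx
        · right; left; exact httg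
        · left; rfl
        · right; right; exact htcl _ hx
      have hQins : ∀ x : G,
          ¬ Subgroup.closure (↑(insert x (insert (t * g) (insert g P))) : Set G) = ⊤ := by
        intro x hxtop
        apply hwin x
        apply hng (↑(insert x (insert g P)) : Set G)
        rw [eq_top_iff, ← hxtop]
        apply (Subgroup.closure_le _).2
        intro y hy
        have hx' : x ∈ Subgroup.closure (insert t (↑(insert x (insert g P)) : Set G)) :=
          Subgroup.subset_closure (by simp)
        have ht' : t ∈ Subgroup.closure (insert t (↑(insert x (insert g P)) : Set G)) :=
          Subgroup.subset_closure (by simp)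
        have hg' : g ∈ Subgroup.closure (insert t (↑(insert x (insert g P)) : Set G)) :=
          Subgroup.subset_closure (by simp)
        simp only [Finset.coe_insert, Set.mem_insert_iff, Finset.mem_coe] at hy
        rcases hy with rfl | rfl | rfl | hy
        · exact hx'
        · exact mul_mem ht' hg'
        · exact hg'
        · exact Subgroup.subset_closure (by simp [hy])
      have hQequiv := IH (insert (t * g) (insert g P)) hQcard hQtcl hQins
      exact genGame_fuzzy (hins g) htg_not hQequiv

end Aux

section GroupAux

variable {T H : Type} [Group T] [Fintype T] [Group H] [Fintype H]

/-- For `T` a `2`-group and `H` of odd order, an element of the Frattini subgroup of `T`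
(embedded in `T × H`) is a non-generator of `T × H`. -/
lemma prod_nongenerating (hT : ∃ n : ℕ, Fintype.card T = 2 ^ n)
    (hH : Odd (Fintype.card H)) {t : T} (htf : t ∈ frattini T) :
    ∀ S : Set (T × H), Subgroup.closure (insert ((t, 1) : T × H) S) = ⊤ →
      Subgroup.closure S = ⊤ := by
  obtain ⟨n, hn⟩ := hT
  intro S hS
  set K : Subgroup (T × H) := Subgroup.closure S with hK
  set A : Subgroup T := K.comap (MonoidHom.inl T H) with hA
  set B : Subgroup H := K.comap (MonoidHom.inr T H) with hB
  -- every element of `K` splits into its components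
  have hKA : ∀ p : T × H, p ∈ K → ((p.1, 1) : T × H) ∈ K ∧ ((1, p.2) : T × H) ∈ K := by
    rintro ⟨a, b⟩ hab
    constructor
    · -- first component
      have h1 : ((a, b) : T × H) ^ (Fintype.card H) = ((a ^ Fintype.card H, 1) : T × H) := by
        rw [Prod.pow_mk, pow_card_eq_one]
      have hm : ((a ^ Fintype.card H, 1) : T × H) ∈ K := by
        rw [← h1]; exact pow_mem hab _
      rcases eq_or_ne (orderOf a) 1 with ho | ho
      · have : a = 1 := orderOf_eq_one_iff.1 ho
        subst this
        exact one_mem K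
      · have holt : 1 < orderOf a := lt_of_le_of_ne (orderOf_pos a) (Ne.symm ho)
        have hcop : (Fintype.card H).Coprime (orderOf a) := by
          have h2 : Nat.Coprime (Fintype.card H) (2 ^ n) :=
            (Nat.coprime_two_right.mpr hH).pow_right _
          exact h2.coprime_dvd_right (hn ▸ orderOf_dvd_card)
        obtain ⟨c, -, hc⟩ := Nat.exists_mul_mod_eq_one_of_coprime hcop holt
        have hpow : (a ^ Fintype.card H) ^ c = a := by
          rw [← pow_mul, ← pow_mod_orderOf, hc, pow_one]
        have : ((a ^ Fintype.card H, 1) : T × H) ^ c = ((a, 1) : T × H) := by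
          rw [Prod.pow_mk, hpow, one_pow]
        rw [← this]
        exact pow_mem hm _
    · -- second component
      have h1 : ((a, b) : T × H) ^ (Fintype.card T) = ((1, b ^ Fintype.card T) : T × H) := by
        rw [Prod.pow_mk, pow_card_eq_one]
      have hm : ((1, b ^ Fintype.card T) : T × H) ∈ K := by
        rw [← h1]; exact pow_mem hab _
      rcases eq_or_ne (orderOf b) 1 with ho | ho
      · have : b = 1 := orderOf_eq_one_iff.1 ho
        subst this
        exact one_mem K
      · have holt : 1 < orderOf b := lt_of_le_of_ne (orderOf_pos b) (Ne.symm ho)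
        have hob : Odd (orderOf b) := by
          rcases Nat.even_or_odd (orderOf b) with he | ho'
          · exfalso
            have h2 : (2 : ℕ) ∣ Fintype.card H := dvd_trans he.two_dvd orderOf_dvd_card
            obtain ⟨c, hc⟩ := h2
            have := Nat.odd_iff.mp hH
            omega
          · exact ho'
        have hcop : (Fintype.card T).Coprime (orderOf b) := by
          rw [hn]
          exact Nat.Coprime.pow_left _ (Nat.coprime_two_left.mpr hob)
        obtain ⟨c, -, hc⟩ := Nat.exists_mul_mod_eq_one_of_coprime hcop holt
        have hpow : (b ^ Fintype.card T) ^ c = b := by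
          rw [← pow_mul, ← pow_mod_orderOf, hc, pow_one]
        have : ((1, b ^ Fintype.card T) : T × H) ^ c = ((1, b) : T × H) := by
          rw [Prod.pow_mk, hpow, one_pow]
        rw [← this]
        exact pow_mem hm _
  -- the closure with `t` added is contained in a product
  have hle : Subgroup.closure (insert ((t, 1) : T × H) S) ≤
      (A ⊔ Subgroup.zpowers t).prod B := by
    apply (Subgroup.closure_le _).2
    rintro p hp
    rcases Set.mem_insert_iff.1 hp with rfl | hp
    · exact Subgroup.mem_prod.2
        ⟨(le_sup_right : Subgroup.zpowers t ≤ A ⊔ Subgroup.zpowers t) (Subgroup.mem_zpowers t),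
          one_mem B⟩
    · have hpK : p ∈ K := Subgroup.subset_closure hp
      obtain ⟨h1, h2⟩ := hKA p hpK
      refine Subgroup.mem_prod.2 ⟨?_, ?_⟩
      · have hinA : p.1 ∈ A := by
          rw [hA, Subgroup.mem_comap]
          simpa using h1
        exact (le_sup_left : A ≤ A ⊔ Subgroup.zpowers t) hinA
      · show p.2 ∈ B
        rw [hB, Subgroup.mem_comap]
        simpa using h2
  rw [hS] at hle
  have hAsup : A ⊔ Subgroup.zpowers t = ⊤ := by
    rw [eq_top_iff]
    intro a _
    exact (Subgroup.mem_prod.1 (hle (Subgroup.mem_top ((a, 1) : T × H)))).1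
  have hBtop : B = ⊤ := by
    rw [eq_top_iff]
    intro b _
    exact (Subgroup.mem_prod.1 (hle (Subgroup.mem_top ((1, b) : T × H)))).2
  have hzle : Subgroup.zpowers t ≤ frattini T := by
    rw [Subgroup.zpowers_le]
    exact htf
  have hAfr : A ⊔ frattini T = ⊤ := by
    rw [eq_top_iff, ← hAsup]
    exact sup_le_sup_left hzle A
  have hAtop : A = ⊤ := frattini_nongenerating hAfr
  rw [eq_top_iff]
  rintro ⟨a, b⟩ _
  have ha : ((a, 1) : T × H) ∈ K := by
    have : a ∈ A := hAtop ▸ Subgroup.mem_top a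
    rw [hA, Subgroup.mem_comap] at this
    simpa using this
  have hb : ((1, b) : T × H) ∈ K := by
    have : b ∈ B := hBtop ▸ Subgroup.mem_top b
    rw [hB, Subgroup.mem_comap] at this
    simpa using this
  have hab : ((a, b) : T × H) = ((a, 1) : T × H) * ((1, b) : T × H) := by
    simp
  rw [hab]
  exact mul_mem ha hb

end GroupAux

theorem nimGEN_of_minGen_eq_two_frattini_nontrivial (T H : Type) [Group T] [Fintype T]
    [Group H] [Fintype H] (hT : ∃ n : ℕ, Fintype.card T = 2 ^ n)
    (hH : Odd (Fintype.card H)) (hd : minGen (T × H) = 2) (hfr : frattini T ≠ ⊥) :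
    nimGEN (T × H) = ∗0 := by
  -- no single element generates `T × H`
  have hsingle : ∀ x : T × H, ¬ Subgroup.closure ({x} : Set (T × H)) = ⊤ := by
    intro x hx
    have h1 : (1 : ℕ) ∈ {n : ℕ | ∃ S : Finset (T × H), S.card = n ∧
        Subgroup.closure (S : Set (T × H)) = ⊤} :=
      ⟨{x}, Finset.card_singleton x, by simpa using hx⟩
    have h2 := Nat.sInf_le h1
    rw [minGen] at hd
    omega
  -- an involution in the Frattini subgroup of `T`
  obtain ⟨⟨x, hxf⟩, hx1'⟩ := Subgroup.ne_bot_iff_exists_ne_one.1 hfr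
  have hx1 : x ≠ 1 := fun h => hx1' (Subtype.ext h)
  obtain ⟨n, hn⟩ := hT
  have hdvd : orderOf x ∣ 2 ^ n := hn ▸ orderOf_dvd_card
  obtain ⟨k, hk, hke⟩ := (Nat.dvd_prime_pow Nat.prime_two).1 hdvd
  have hk0 : k ≠ 0 := by
    rintro rfl
    simp only [pow_zero] at hke
    exact hx1 (orderOf_eq_one_iff.1 hke)
  obtain ⟨k', rfl⟩ : ∃ k', k = k' + 1 :=
    ⟨k - 1, (Nat.succ_pred_eq_of_pos (Nat.pos_of_ne_zero hk0)).symm⟩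
  set t := x ^ (2 ^ k') with htdef
  have ht2 : t * t = 1 := by
    rw [htdef, ← pow_add]
    have hsum : 2 ^ k' + 2 ^ k' = 2 ^ (k' + 1) := by
      rw [pow_succ]; ring
    rw [hsum, ← hke, pow_orderOf_eq_one]
  have ht1 : t ≠ 1 := by
    intro h
    have hdd : orderOf x ∣ 2 ^ k' := orderOf_dvd_of_pow_eq_one h
    rw [hke] at hdd
    have := (Nat.pow_dvd_pow_iff_le_right (by norm_num : 1 < 2)).1 hdd
    omega
  have htf : t ∈ frattini T := pow_mem hxf _
  -- the strategy element of `T × H`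
  have hte1 : ((t, 1) : T × H) ≠ 1 := fun h => ht1 (congrArg Prod.fst h)
  have hte2 : ((t, 1) : T × H) * ((t, 1) : T × H) = 1 := by
    rw [Prod.mk_mul_mk, ht2, one_mul]
    rfl
  have hng := prod_nongenerating ⟨n, hn⟩ hH htf
  have key := genGame_main ((t, 1) : T × H) hte1 hte2 hng (Fintype.card (T × H))
    (∅ : Finset (T × H)) (by omega) (by simp) (fun y => by simpa using hsingle y)
  rw [nimGEN, key]
  exact Ordinal.bot_eq_zero
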